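/- Let P_1, …, P_m be a Clifford system of signature (m, r) on ℝ^{2l}_s with m ≡ 0 (mod 4) and r ≡ 0 (mod 2), and set P := P_1P_2⋯P_m. Let z ∈ M_{+,3}, with unique decomposition z = z_+ + z_− (z_+ ∈ E_+(P), z_− ∈ E_−(P)); then ⟨z_+,z_+⟩, ⟨z_−,z_−⟩ ∈ (0,1). Set x := z_+/√⟨z_+,z_+⟩ and y := z_−/√⟨z_−,z_−⟩. Then the curve α(t) := (cos t)x + (sin t)y, t ∈ [0, π/2], satisfies α(t) ∈ M_+ for all t ∈ [0, π/2], α(0) = x, α(π/2) = y, and α(t_z) = z for the unique t_z ∈ (0, π/2) with cos t_z = √⟨z_+,z_+⟩ and sin t_z = √⟨z_−,z_−⟩; in particular there is a path in M_+ from x to y through z. Moreover, ⟨P_j x, y⟩ = 0 for all j ∈ {1, …, m}. -/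

import Mathlib

open Matrix

noncomputable section

/-- Entries of the signature matrix `J_{r,m-r}`, with 1-based indices:
`η_{ii} = -1` for `1 ≤ i ≤ r` and `η_{ii} = 1` for `r < i`; off-diagonal entries vanish. -/
def cliffEta (r i j : ℕ) : ℝ :=
  if i = j then (if i ≤ r then -1 else 1) else 0

/-- The matrix `J_{s,n-s} = diag(-E_s, E_{n-s})`. -/
def psJ (n s : ℕ) : Matrix (Fin n) (Fin n) ℝ :=
  Matrix.diagonal fun i => if (i : ℕ) < s then (-1 : ℝ) else 1

/-- The pseudo-inner product `⟨u, v⟩ = uᵀ J_{s,n-s} v` of `ℝ^n_s`. -/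
def psInner (n s : ℕ) (u v : Fin n → ℝ) : ℝ :=
  u ⬝ᵥ ((psJ n s) *ᵥ v)

/-- A Clifford system of signature `(m, r)` on `ℝ^{2l}_s`, indexed by `1, …, m`:
each `P i` is symmetric with respect to the pseudo-inner product, and
`P i * P j + P j * P i = 2 η_{ij} E_{2l}`. -/
def IsCliffordSystem (l s m r : ℕ)
    (P : ℕ → Matrix (Fin (2 * l)) (Fin (2 * l)) ℝ) : Prop :=
  (∀ i ∈ Finset.Icc 1 m, (P i)ᵀ = psJ (2 * l) s * P i * psJ (2 * l) s) ∧
  (∀ i ∈ Finset.Icc 1 m, ∀ j ∈ Finset.Icc 1 m,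
    P i * P j + P j * P i
      = (2 * cliffEta r i j) • (1 : Matrix (Fin (2 * l)) (Fin (2 * l)) ℝ))


lemma psJ_mul_psJ (n s : ℕ) : psJ n s * psJ n s = 1 := by
  rw [psJ, Matrix.diagonal_mul_diagonal]
  convert Matrix.diagonal_one with i
  by_cases h : (i : ℕ) < s <;> simp [h]

lemma psJ_transpose (n s : ℕ) : (psJ n s)ᵀ = psJ n s := Matrix.diagonal_transpose _

lemma psInner_symm (n s : ℕ) (u v : Fin n → ℝ) : psInner n s u v = psInner n s v u := by
  rw [psInner, psInner, Matrix.dotProduct_mulVec, ← Matrix.vecMul_transpose, psJ_transpose,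
    dotProduct_comm]

lemma psInner_add_left (n s : ℕ) (u v w : Fin n → ℝ) :
    psInner n s (u + v) w = psInner n s u w + psInner n s v w := by
  simp [psInner, add_dotProduct]

lemma psInner_add_right (n s : ℕ) (u v w : Fin n → ℝ) :
    psInner n s u (v + w) = psInner n s u v + psInner n s u w := by
  simp [psInner, Matrix.mulVec_add, dotProduct_add]

lemma psInner_smul_left (n s : ℕ) (c : ℝ) (u v : Fin n → ℝ) :
    psInner n s (c • u) v = c * psInner n s u v := by
  simp [psInner, smul_dotProduct]

lemma psInner_smul_right (n s : ℕ) (c : ℝ) (u v : Fin n → ℝ) :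
    psInner n s u (c • v) = c * psInner n s u v := by
  simp [psInner, Matrix.mulVec_smul, dotProduct_smul]

lemma psInner_mulVec (n s : ℕ) (A : Matrix (Fin n) (Fin n) ℝ)
    (hA : Aᵀ = psJ n s * A * psJ n s) (u v : Fin n → ℝ) :
    psInner n s (A *ᵥ u) v = psInner n s u (A *ᵥ v) := by
  rw [psInner, psInner, Matrix.dotProduct_mulVec, ← Matrix.vecMul_transpose, hA, Matrix.vecMul_vecMul,
    Matrix.mul_assoc (psJ n s * A), psJ_mul_psJ, Matrix.mul_one, Matrix.mulVec_mulVec,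
    Matrix.dotProduct_mulVec]

lemma moveA {n : ℕ} (P : ℕ → Matrix (Fin n) (Fin n) ℝ) (j : ℕ) :
    ∀ (idx : List ℕ), (∀ i ∈ idx, i ≠ j → P j * P i = -(P i * P j)) →
    P j * (idx.map P).prod =
      ((-1 : ℝ) ^ (idx.countP (fun i => i ≠ j))) • ((idx.map P).prod * P j) := by
  intro idx
  induction idx with
  | nil => simp
  | cons i T ih =>
    intro h
    have hT := ih (fun i hi => h i (List.mem_cons_of_mem _ hi))
    by_cases hij : i = j
    · subst hij
      have hc : List.countP (fun k => decide (k ≠ i)) (i :: T)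
          = List.countP (fun k => decide (k ≠ i)) T := by
        simp [List.countP_cons]
      simp only [List.map_cons, List.prod_cons, hc]
      conv_rhs => rw [Matrix.mul_assoc, ← Matrix.mul_smul, ← hT]
    · simp only [List.map_cons, List.prod_cons, List.countP_cons]
      rw [← Matrix.mul_assoc, h i List.mem_cons_self hij, Matrix.neg_mul,
        Matrix.mul_assoc, hT]
      have : (List.countP (fun i => decide (i ≠ j)) T + if (fun i => decide (i ≠ j)) i = true then 1 else 0)
          = List.countP (fun i => decide (i ≠ j)) T + 1 := by simp [hij]
      rw [this, pow_succ]
      rw [Matrix.mul_smul]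
      rw [← Matrix.mul_assoc]
      module

lemma conj_prod {n : ℕ} (J : Matrix (Fin n) (Fin n) ℝ) (hJ : J * J = 1) :
    ∀ (L : List (Matrix (Fin n) (Fin n) ℝ)),
      (L.map (fun A => J * A * J)).prod = J * L.prod * J := by
  intro L
  induction L with
  | nil => simp [hJ]
  | cons A T ih =>
    simp only [List.map_cons, List.prod_cons, ih]
    simp only [Matrix.mul_assoc]
    rw [show J * (J * (T.prod * J)) = (J * J) * (T.prod * J) from (Matrix.mul_assoc _ _ _).symm,
      hJ, Matrix.one_mul]

lemma tri_succ (t : ℕ) : (t + 1) * t / 2 = t * (t - 1) / 2 + t := by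
  cases t with
  | zero => rfl
  | succ k =>
    have h : (k + 1 + 1) * (k + 1) = (k + 1) * k + 2 * (k + 1) := by ring
    rw [h, Nat.add_mul_div_left _ _ (by norm_num : 0 < 2)]
    simp

lemma revA {n : ℕ} (P : ℕ → Matrix (Fin n) (Fin n) ℝ) :
    ∀ (idx : List ℕ), (∀ i ∈ idx, ∀ j ∈ idx, i ≠ j → P j * P i = -(P i * P j)) →
      idx.Nodup →
      (idx.reverse.map P).prod
        = ((-1 : ℝ) ^ (idx.length * (idx.length - 1) / 2)) • (idx.map P).prod := by
  intro idx
  induction idx with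
  | nil => simp
  | cons i T ih =>
    intro h hnd
    have hndT := hnd.of_cons
    have hiT : i ∉ T := (List.nodup_cons.mp hnd).1
    have hT := ih (fun a ha b hb hab =>
      h a (List.mem_cons_of_mem _ ha) b (List.mem_cons_of_mem _ hb) hab) hndT
    have hmove := moveA P i T (fun k hk hki =>
      h k (List.mem_cons_of_mem _ hk) i List.mem_cons_self
        (fun hc => hki hc))
    have hcount : T.countP (fun k => k ≠ i) = T.length := by
      rw [List.countP_eq_length]
      intro a ha
      simp only [decide_eq_true_eq]
      exact fun hc => hiT (hc ▸ ha)
    rw [hcount] at hmove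
    have h2 : (T.map P).prod * P i = ((-1 : ℝ) ^ T.length) • (P i * (T.map P).prod) := by
      have := congrArg (fun M => ((-1 : ℝ) ^ T.length) • M) hmove
      simp only [smul_smul, ← pow_add] at this
      rw [Even.neg_one_pow ⟨T.length, rfl⟩, one_smul] at this
      exact this.symm
    rw [List.reverse_cons, List.map_append, List.prod_append]
    simp only [List.map_cons, List.map_nil, List.prod_cons, List.prod_nil, Matrix.mul_one]
    rw [hT, Matrix.smul_mul, h2, smul_smul, ← pow_add]
    simp only [List.map_cons, List.prod_cons, List.length_cons]
    rw [show (T.length + 1) * (T.length + 1 - 1) / 2 = T.length * (T.length - 1) / 2 + T.length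
      from by simpa using tri_succ T.length]

lemma countP_ne_add_eq (L : List ℕ) (t : ℕ) :
    L.countP (fun i => i ≠ t) + L.countP (fun i => i = t) = L.length := by
  induction L with
  | nil => simp
  | cons a T ih =>
    simp only [List.countP_cons, List.length_cons]
    by_cases h : a = t
    · have h1 : (decide (a ≠ t)) = false := by simp [h]
      have h2 : (decide (a = t)) = true := by simp [h]
      simp only [h1, h2]
      simp only [Bool.false_eq_true, if_false, if_true]
      omega
    · have h1 : (decide (a ≠ t)) = true := by simp [h]
      have h2 : (decide (a = t)) = false := by simp [h]
      simp only [h1, h2]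
      simp only [Bool.false_eq_true, if_false, if_true]
      omega

lemma countP_eq_range (N t : ℕ) :
    (List.range N).countP (fun k => k = t) = if t < N then 1 else 0 := by
  induction N with
  | zero => simp
  | succ n ih =>
    rw [List.range_succ, List.countP_append, ih]
    simp only [List.countP_cons, List.countP_nil]
    by_cases h : n = t
    · have h2 : (decide (n = t)) = true := by simp [h]
      simp only [h2, if_true]
      split_ifs <;> omega
    · have h2 : (decide (n = t)) = false := by simp [h]
      simp only [h2, Bool.false_eq_true, if_false]
      split_ifs <;> omega

/-- with `m ≡ 0 (mod 4)`, `r ≡ 0 (mod 2)`, `P = P_1 ⋯ P_m`, if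
`z = z₊ + z₋ ∈ M₊,₃` (i.e. `z ∈ M₊` with `0 < ⟨z₊,z₊⟩ < 1`), then also
`⟨z₋,z₋⟩ ∈ (0,1)`; setting `x = z₊/√⟨z₊,z₊⟩`, `y = z₋/√⟨z₋,z₋⟩`, the curve
`α(t) = (cos t)x + (sin t)y` lies in `M₊` for `t ∈ [0, π/2]`, with `α(0) = x`,
`α(π/2) = y`, and `α(t_z) = z` for the `t_z ∈ (0, π/2)` with `cos t_z = √⟨z₊,z₊⟩`,
`sin t_z = √⟨z₋,z₋⟩`; moreover `⟨P_j x, y⟩ = 0` for all `j ∈ {1, …, m}`. -/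
theorem path_through_Mplus3 (l s m r : ℕ) (hl : 0 < l) (hs : s ≤ 2 * l)
    (hm : 2 ≤ m) (hm4 : m % 4 = 0) (hr : r ≤ m) (hr2 : r % 2 = 0)
    (P : ℕ → Matrix (Fin (2 * l)) (Fin (2 * l)) ℝ)
    (hP : IsCliffordSystem l s m r P)
    (Pm : Matrix (Fin (2 * l)) (Fin (2 * l)) ℝ)
    (hPm : Pm = ((List.range m).map fun k => P (1 + k)).prod)
    (Mp : Set (Fin (2 * l) → ℝ))
    (hMp : Mp = {x | psInner (2 * l) s x x = 1 ∧
      ∀ j ∈ Finset.Icc 1 m, psInner (2 * l) s (P j *ᵥ x) x = 0})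
    (z zp zm : Fin (2 * l) → ℝ)
    (hzp : Pm *ᵥ zp = zp) (hzm : Pm *ᵥ zm = -zm) (hz : z = zp + zm)
    (hzM : z ∈ Mp)
    (hz3 : 0 < psInner (2 * l) s zp zp ∧ psInner (2 * l) s zp zp < 1)
    (x y : Fin (2 * l) → ℝ)
    (hx : x = (Real.sqrt (psInner (2 * l) s zp zp))⁻¹ • zp)
    (hy : y = (Real.sqrt (psInner (2 * l) s zm zm))⁻¹ • zm)
    (α : ℝ → (Fin (2 * l) → ℝ))
    (hα : α = fun t => Real.cos t • x + Real.sin t • y) :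
    (0 < psInner (2 * l) s zm zm ∧ psInner (2 * l) s zm zm < 1) ∧
    (∀ t ∈ Set.Icc (0 : ℝ) (Real.pi / 2), α t ∈ Mp) ∧
    α 0 = x ∧ α (Real.pi / 2) = y ∧
    (∃ tz ∈ Set.Ioo (0 : ℝ) (Real.pi / 2),
      Real.cos tz = Real.sqrt (psInner (2 * l) s zp zp) ∧
      Real.sin tz = Real.sqrt (psInner (2 * l) s zm zm) ∧ α tz = z) ∧
    (∀ j ∈ Finset.Icc 1 m, psInner (2 * l) s (P j *ᵥ x) y = 0) := by
  obtain ⟨hPsym, hPrel⟩ := hP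
  obtain ⟨hA0, hA1⟩ := hz3
  set J : Matrix (Fin (2 * l)) (Fin (2 * l)) ℝ := psJ (2 * l) s with hJdef
  -- anticommutation of distinct P's
  have hAnti : ∀ i ∈ Finset.Icc 1 m, ∀ j ∈ Finset.Icc 1 m, i ≠ j →
      P j * P i = -(P i * P j) := by
    intro i hi j hj hij
    have h1 := hPrel i hi j hj
    rw [show cliffEta r i j = 0 from by simp [cliffEta, hij], mul_zero, zero_smul] at h1
    exact eq_neg_of_add_eq_zero_right h1
  set idx : List ℕ := (List.range m).map (fun k => 1 + k) with hidx
  have hPmidx : Pm = (idx.map P).prod := by rw [hPm, hidx, List.map_map]; rfl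
  have hmem : ∀ i ∈ idx, i ∈ Finset.Icc 1 m := by
    intro i hi
    rw [hidx, List.mem_map] at hi
    obtain ⟨k, hk, rfl⟩ := hi
    rw [List.mem_range] at hk
    simp [Finset.mem_Icc]; omega
  have hlen : idx.length = m := by simp [hidx]
  have hnd : idx.Nodup := List.Nodup.map (fun a b h => by omega) List.nodup_range
  -- each P j anticommutes with Pm
  have hPjPm : ∀ j ∈ Finset.Icc 1 m, P j * Pm = -(Pm * P j) := by
    intro j hj
    have hmv := moveA P j idx (fun i hi hij => hAnti i (hmem i hi) j hj hij)
    have hjm : 1 ≤ j ∧ j ≤ m := Finset.mem_Icc.mp hj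
    have hcnt : idx.countP (fun i => i ≠ j) = m - 1 := by
      rw [hidx, List.countP_map]
      have e1 : (List.range m).countP ((fun i => decide (i ≠ j)) ∘ (fun k => 1 + k))
          = (List.range m).countP (fun k => k ≠ j - 1) := by
        apply List.countP_congr
        intro a _
        simp only [Function.comp_apply, decide_eq_true_eq]
        omega
      rw [e1]
      have hk := countP_ne_add_eq (List.range m) (j - 1)
      have hr2 := countP_eq_range m (j - 1)
      rw [List.length_range] at hk
      rw [if_pos (by omega : j - 1 < m)] at hr2
      omega
    rw [hcnt] at hmv
    have hodd : Odd (m - 1) := ⟨(m - 2) / 2, by omega⟩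
    rw [Odd.neg_one_pow hodd, neg_one_smul] at hmv
    rw [hPmidx]
    exact hmv
  -- Pm is symmetric w.r.t. the pseudo-inner product
  have hPmT : Pmᵀ = J * Pm * J := by
    rw [hPmidx, Matrix.transpose_list_prod]
    have hmapT : (idx.map P).map Matrix.transpose = idx.map (fun i => J * P i * J) := by
      rw [List.map_map]
      apply List.map_congr_left
      intro i hi
      exact hPsym i (hmem i hi)
    rw [hmapT, ← List.map_reverse]
    have hconj := conj_prod J (psJ_mul_psJ (2 * l) s) (idx.reverse.map P)
    rw [List.map_map] at hconj
    have heq : (idx.reverse.map fun i => J * P i * J)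
        = List.map ((fun A => J * A * J) ∘ P) idx.reverse := rfl
    rw [heq, hconj]
    have hrev := revA P idx (fun a ha b hb hab => hAnti a (hmem a ha) b (hmem b hb) hab) hnd
    obtain ⟨q, hq⟩ : ∃ q, m = 4 * q := ⟨m / 4, by omega⟩
    have heven : Even (idx.length * (idx.length - 1) / 2) := by
      rw [hlen]
      have hmm : m * (m - 1) = 2 * (2 * q * (m - 1)) := by
        rw [hq]; ring
      rw [hmm, Nat.mul_div_cancel_left _ (by norm_num : 0 < 2)]
      exact ⟨q * (m - 1), by ring⟩
    rw [hrev, Even.neg_one_pow heven, one_smul]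
  have hPmsym : ∀ u v, psInner (2 * l) s (Pm *ᵥ u) v = psInner (2 * l) s u (Pm *ᵥ v) :=
    psInner_mulVec (2 * l) s Pm hPmT
  have hPjsym : ∀ j ∈ Finset.Icc 1 m, ∀ u v,
      psInner (2 * l) s (P j *ᵥ u) v = psInner (2 * l) s u (P j *ᵥ v) :=
    fun j hj => psInner_mulVec (2 * l) s (P j) (hPsym j hj)
  -- orthogonality of the two eigenspaces
  have horth : ∀ u v, Pm *ᵥ u = u → Pm *ᵥ v = -v → psInner (2 * l) s u v = 0 := by
    intro u v hu hv
    have h1 : psInner (2 * l) s u v = psInner (2 * l) s (Pm *ᵥ u) v := by rw [hu]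
    rw [hPmsym, hv, show -v = (-1 : ℝ) • v from (neg_one_smul ℝ v).symm,
      psInner_smul_right] at h1
    linarith
  have hpm0 : psInner (2 * l) s zp zm = 0 := horth zp zm hzp hzm
  have hmp0 : psInner (2 * l) s zm zp = 0 := by rw [psInner_symm]; exact hpm0
  rw [hMp] at hzM
  obtain ⟨hz1, hz2⟩ := hzM
  have hB : psInner (2 * l) s zm zm = 1 - psInner (2 * l) s zp zp := by
    rw [hz, psInner_add_left, psInner_add_right, psInner_add_right, hpm0, hmp0] at hz1
    linarith
  have hB0 : 0 < psInner (2 * l) s zm zm := by rw [hB]; linarith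
  have hB1 : psInner (2 * l) s zm zm < 1 := by rw [hB]; linarith
  -- eigenvector swaps
  have hPjzp : ∀ j ∈ Finset.Icc 1 m, Pm *ᵥ (P j *ᵥ zp) = -(P j *ᵥ zp) := by
    intro j hj
    have hc : Pm * P j = -(P j * Pm) := by
      rw [hPjPm j hj]; exact (neg_neg _).symm
    rw [Matrix.mulVec_mulVec, hc, Matrix.neg_mulVec, ← Matrix.mulVec_mulVec, hzp]
  have hPjzm : ∀ j ∈ Finset.Icc 1 m, Pm *ᵥ (P j *ᵥ zm) = P j *ᵥ zm := by
    intro j hj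
    have hc : Pm * P j = -(P j * Pm) := by
      rw [hPjPm j hj]; exact (neg_neg _).symm
    rw [Matrix.mulVec_mulVec, hc, Matrix.neg_mulVec, ← Matrix.mulVec_mulVec, hzm,
      Matrix.mulVec_neg, neg_neg]
  have h_pp : ∀ j ∈ Finset.Icc 1 m, psInner (2 * l) s (P j *ᵥ zp) zp = 0 := by
    intro j hj
    rw [psInner_symm]
    exact horth zp (P j *ᵥ zp) hzp (hPjzp j hj)
  have h_mm : ∀ j ∈ Finset.Icc 1 m, psInner (2 * l) s (P j *ᵥ zm) zm = 0 := by
    intro j hj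
    exact horth (P j *ᵥ zm) zm (hPjzm j hj) hzm
  have h_pm : ∀ j ∈ Finset.Icc 1 m, psInner (2 * l) s (P j *ᵥ zp) zm = 0 := by
    intro j hj
    have h0 := hz2 j hj
    rw [hz, Matrix.mulVec_add, psInner_add_left, psInner_add_right, psInner_add_right,
      h_pp j hj, h_mm j hj] at h0
    have hswap : psInner (2 * l) s (P j *ᵥ zm) zp = psInner (2 * l) s (P j *ᵥ zp) zm := by
      rw [hPjsym j hj, psInner_symm]
    rw [hswap] at h0
    linarith
  -- square roots
  set a := Real.sqrt (psInner (2 * l) s zp zp) with hadef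
  set b := Real.sqrt (psInner (2 * l) s zm zm) with hbdef
  have ha0 : 0 < a := Real.sqrt_pos.mpr hA0
  have hb0 : 0 < b := Real.sqrt_pos.mpr hB0
  have ha2 : a ^ 2 = psInner (2 * l) s zp zp := Real.sq_sqrt hA0.le
  have hb2 : b ^ 2 = psInner (2 * l) s zm zm := Real.sq_sqrt hB0.le
  have hb1 : b < 1 := by
    rw [hbdef, show (1 : ℝ) = Real.sqrt 1 from Real.sqrt_one.symm]
    exact Real.sqrt_lt_sqrt hB0.le hB1
  -- inner products of x and y
  have hxx : psInner (2 * l) s x x = 1 := by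
    rw [hx, psInner_smul_left, psInner_smul_right, ← ha2]
    field_simp
  have hyy : psInner (2 * l) s y y = 1 := by
    rw [hy, psInner_smul_left, psInner_smul_right, ← hb2]
    field_simp
  have hxy : psInner (2 * l) s x y = 0 := by
    rw [hx, hy, psInner_smul_left, psInner_smul_right, hpm0]; ring
  have hyx : psInner (2 * l) s y x = 0 := by rw [psInner_symm]; exact hxy
  have hPjxx : ∀ j ∈ Finset.Icc 1 m, psInner (2 * l) s (P j *ᵥ x) x = 0 := by
    intro j hj
    rw [hx, Matrix.mulVec_smul, psInner_smul_left, psInner_smul_right, h_pp j hj]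
    ring
  have hPjyy : ∀ j ∈ Finset.Icc 1 m, psInner (2 * l) s (P j *ᵥ y) y = 0 := by
    intro j hj
    rw [hy, Matrix.mulVec_smul, psInner_smul_left, psInner_smul_right, h_mm j hj]
    ring
  have hPjxy : ∀ j ∈ Finset.Icc 1 m, psInner (2 * l) s (P j *ᵥ x) y = 0 := by
    intro j hj
    rw [hx, hy, Matrix.mulVec_smul, psInner_smul_left, psInner_smul_right,
      h_pm j hj]
    ring
  have hPjyx : ∀ j ∈ Finset.Icc 1 m, psInner (2 * l) s (P j *ᵥ y) x = 0 := by
    intro j hj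
    rw [hPjsym j hj, psInner_symm]
    exact hPjxy j hj
  refine ⟨⟨hB0, hB1⟩, ?_, ?_, ?_, ?_, ?_⟩
  · -- α t ∈ Mp
    intro t _
    rw [hMp]
    constructor
    · show psInner (2 * l) s (α t) (α t) = 1
      rw [hα]
      simp only
      rw [psInner_add_left, psInner_add_right, psInner_add_right,
        psInner_smul_left, psInner_smul_left, psInner_smul_right, psInner_smul_right,
        psInner_smul_left, psInner_smul_right, psInner_smul_left, psInner_smul_right,
        hxx, hyy, hxy, hyx]
      have := Real.sin_sq_add_cos_sq t
      ring_nf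
      nlinarith [Real.sin_sq_add_cos_sq t]
    · intro j hj
      show psInner (2 * l) s (P j *ᵥ α t) (α t) = 0
      rw [hα]
      simp only
      rw [Matrix.mulVec_add, Matrix.mulVec_smul, Matrix.mulVec_smul,
        psInner_add_left, psInner_add_right, psInner_add_right,
        psInner_smul_left, psInner_smul_left, psInner_smul_right, psInner_smul_right,
        psInner_smul_left, psInner_smul_right, psInner_smul_left, psInner_smul_right,
        hPjxx j hj, hPjyy j hj, hPjxy j hj, hPjyx j hj]
      ring
  · rw [hα]; simp
  · rw [hα]; simp
  · refine ⟨Real.arcsin b, ⟨Real.arcsin_pos.mpr hb0, Real.arcsin_lt_pi_div_two.mpr hb1⟩,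
      ?_, ?_, ?_⟩
    · rw [Real.cos_arcsin, hb2, hB, hadef]
      ring_nf
    · exact Real.sin_arcsin (by linarith) hb1.le
    · rw [hα]
      simp only
      rw [Real.sin_arcsin (by linarith) hb1.le, Real.cos_arcsin, hb2, hB,
        show (1 : ℝ) - (1 - psInner (2 * l) s zp zp) = psInner (2 * l) s zp zp from by ring,
        ← hadef, hx, hy, smul_smul, smul_smul, mul_inv_cancel₀ (ne_of_gt ha0),
        mul_inv_cancel₀ (ne_of_gt hb0), one_smul, one_smul, hz]
  · exact hPjxy
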